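/- Let A = (0, a_2, a_3, …) be a sequence of nonnegative integers with a_1 = 0. For all complex numbers z with |z| ≤ 1, the series Σ_{m=0}^{∞} e_{A,m} z^m converges and equals the convergent infinite product Π_p ( 1 − 1/p² + Σ_{j=2}^{∞} z^{a_j} (1/p^j − 1/p^{j+1}) ) taken over all primes p. -/

import Mathlib

open scoped BigOperators

/-- A positive integer is *powerful* if every prime dividing it divides it with
multiplicity at least `2`. -/
def Powerful (f : ℕ) : Prop := 0 < f ∧ ∀ p : ℕ, p.Prime → p ∣ f → p ^ 2 ∣ f

/-- The additive function `ω_A(n) = ∑_j a_j ω_j(n)` for a sequence of natural numbers. -/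
def omegaA (a : ℕ → ℕ) (n : ℕ) : ℕ :=
  ∑ p ∈ n.primeFactors, a (n.factorization p)

/-- The density `e_{A,m}` of integers `n` with `ω_A(n) = m`. -/
noncomputable def eAm (a : ℕ → ℕ) (m : ℕ) : ℝ :=
  6 / Real.pi ^ 2 *
    ∑' f : {f : ℕ // Powerful f ∧ omegaA a f = m},
      ((f : ℕ) : ℝ)⁻¹ * ∏ p ∈ (f : ℕ).primeFactors, (1 + 1 / (p : ℝ))⁻¹

namespace EAmAux

noncomputable instance : DecidablePred Powerful := fun _ => Classical.propDecidable _

noncomputable def G (a : ℕ → ℕ) (z : ℂ) (n : ℕ) : ℂ :=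
  if Powerful n then
    z ^ omegaA a n * ((n : ℂ))⁻¹ * ∏ p ∈ n.primeFactors, (1 + 1 / (p : ℂ))⁻¹
  else 0

lemma powerful_one : Powerful 1 :=
  ⟨one_pos, fun p hp hd => (hp.ne_one (Nat.dvd_one.mp hd)).elim⟩

lemma not_powerful_prime {p : ℕ} (hp : p.Prime) : ¬ Powerful p := by
  rintro ⟨-, h⟩
  have := Nat.le_of_dvd hp.pos (h p hp dvd_rfl)
  nlinarith [hp.two_le]

lemma powerful_pow {p e : ℕ} (hp : p.Prime) (he : e ≠ 1) : Powerful (p ^ e) := by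
  refine ⟨pow_pos hp.pos e, fun q hq hd => ?_⟩
  rcases Nat.eq_zero_or_pos e with rfl | he0
  · exact (hq.ne_one (Nat.dvd_one.mp (by simpa using hd))).elim
  · have hqp : q = p := (Nat.prime_dvd_prime_iff_eq hq hp).mp (hq.dvd_of_dvd_pow hd)
    subst hqp
    exact pow_dvd_pow q (by omega)

lemma powerful_mul_iff {m n : ℕ} (h : m.Coprime n) :
    Powerful (m * n) ↔ Powerful m ∧ Powerful n := by
  constructor
  · rintro ⟨hpos, hdvd⟩
    have hm : 0 < m := Nat.pos_of_ne_zero (fun h => by subst h; simp at hpos)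
    have hn : 0 < n := Nat.pos_of_ne_zero (fun h => by subst h; simp at hpos)
    refine ⟨⟨hm, fun p hp hd => ?_⟩, ⟨hn, fun p hp hd => ?_⟩⟩
    · have h2 : p ^ 2 ∣ m * n := hdvd p hp (hd.mul_right n)
      exact (Nat.Coprime.dvd_of_dvd_mul_right
        (Nat.Coprime.pow_left 2 ((Nat.coprime_comm.mp h).coprime_dvd_right hd).symm) h2)
    · have h2 : p ^ 2 ∣ m * n := hdvd p hp (hd.mul_left m)
      exact (Nat.Coprime.dvd_of_dvd_mul_left
        (Nat.Coprime.pow_left 2 (h.coprime_dvd_right hd).symm) h2)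
  · rintro ⟨⟨hm, hm'⟩, ⟨hn, hn'⟩⟩
    refine ⟨mul_pos hm hn, fun p hp hd => ?_⟩
    rcases (Nat.Prime.dvd_mul hp).mp hd with h' | h'
    · exact (hm' p hp h').mul_right n
    · exact (hn' p hp h').mul_left m

lemma omegaA_mul (a : ℕ → ℕ) {m n : ℕ} (hm : m ≠ 0) (hn : n ≠ 0) (h : m.Coprime n) :
    omegaA a (m * n) = omegaA a m + omegaA a n := by
  unfold omegaA
  rw [Nat.Coprime.primeFactors_mul h, Finset.sum_union h.disjoint_primeFactors]
  congr 1
  · refine Finset.sum_congr rfl fun p hp => ?_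
    rw [Nat.factorization_mul hm hn]
    have : n.factorization p = 0 :=
      Nat.factorization_eq_zero_of_not_dvd (fun hd => (Finset.disjoint_left.mp
        h.disjoint_primeFactors hp) (Nat.mem_primeFactors.mpr
          ⟨Nat.prime_of_mem_primeFactors hp, hd, hn⟩))
    simp [this]
  · refine Finset.sum_congr rfl fun p hp => ?_
    rw [Nat.factorization_mul hm hn]
    have : m.factorization p = 0 :=
      Nat.factorization_eq_zero_of_not_dvd (fun hd => (Finset.disjoint_right.mp
        h.disjoint_primeFactors hp) (Nat.mem_primeFactors.mpr
          ⟨Nat.prime_of_mem_primeFactors hp, hd, hm⟩))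
    simp [this]

lemma G_one (a : ℕ → ℕ) (z : ℂ) : G a z 1 = 1 := by
  simp [G, powerful_one, omegaA]

lemma G_zero (a : ℕ → ℕ) (z : ℂ) : G a z 0 = 0 := by
  simp [G, Powerful]

lemma G_mul (a : ℕ → ℕ) (z : ℂ) {m n : ℕ} (h : m.Coprime n) :
    G a z (m * n) = G a z m * G a z n := by
  by_cases hmn : Powerful m ∧ Powerful n
  · obtain ⟨hm, hn⟩ := hmn
    have hm0 : m ≠ 0 := hm.1.ne'
    have hn0 : n ≠ 0 := hn.1.ne'
    rw [G, G, G, if_pos ((powerful_mul_iff h).mpr ⟨hm, hn⟩), if_pos hm, if_pos hn,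
      omegaA_mul a hm0 hn0 h, Nat.Coprime.primeFactors_mul h,
      Finset.prod_union h.disjoint_primeFactors]
    push_cast
    rw [mul_inv]
    ring
  · have : ¬ Powerful (m * n) := fun hc => hmn ((powerful_mul_iff h).mp hc)
    rw [G, if_neg this, G, G]
    rcases not_and_or.mp hmn with h' | h'
    · rw [if_neg h', zero_mul]
    · rw [if_neg h', mul_zero]

lemma G_pow (a : ℕ → ℕ) (z : ℂ) {p : ℕ} (hp : p.Prime) (e : ℕ) :
    G a z (p ^ e) =
      if e = 0 then 1 else if e = 1 then 0
      else z ^ a e * ((p : ℂ) ^ e)⁻¹ * (1 + 1 / (p : ℂ))⁻¹ := by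
  rcases eq_or_ne e 0 with rfl | he0
  · simpa using G_one a z
  rcases eq_or_ne e 1 with rfl | he1
  · simp only [pow_one, if_neg one_ne_zero, if_pos rfl]
    rw [G, if_neg (not_powerful_prime hp)]
    simp
  · rw [G, if_pos (powerful_pow hp he1), if_neg he0, if_neg he1]
    have hpf : (p ^ e).primeFactors = {p} := Nat.primeFactors_prime_pow he0 hp
    have hfac : (p ^ e).factorization p = e := by
      rw [hp.factorization_pow, Finsupp.single_eq_same]
    rw [omegaA, hpf, Finset.sum_singleton, hfac, Finset.prod_singleton]
    push_cast
    ring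

/-- decomposition of a powerful number as `m ^ 2 * a ^ 3`. -/
lemma powerful_decomp {n : ℕ} (h : Powerful n) : ∃ m b : ℕ, n = m ^ 2 * b ^ 3 := by
  obtain ⟨s, b, hs, hb, hn, hsq⟩ := Nat.sq_mul_squarefree_of_pos h.1
  -- n = b ^ 2 * s, s squarefree
  have hdvd : s ∣ b := by
    rw [← Nat.factorization_le_iff_dvd hs.ne' hb.ne', Finsupp.le_def]
    intro p
    rcases Nat.eq_zero_or_pos (s.factorization p) with h0 | hpos
    · simp [h0]
    have hp : p.Prime := Nat.prime_of_mem_primeFactors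
      (by rw [← Nat.support_factorization]; exact Finsupp.mem_support_iff.mpr hpos.ne')
    have hps : p ∣ s := Nat.dvd_of_factorization_pos hpos.ne'
    have hs1 : s.factorization p ≤ 1 := hsq.natFactorization_le_one p
    have hpn : p ∣ n := hn ▸ hps.mul_left _
    have h2 : 2 ≤ n.factorization p := by
      rw [← hp.pow_dvd_iff_le_factorization h.1.ne']
      exact h.2 p hp hpn
    have hfn : n.factorization p = 2 * b.factorization p + s.factorization p := by
      rw [← hn, Nat.factorization_mul (pow_ne_zero _ hb.ne') hs.ne',
        Nat.factorization_pow]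
      simp
    omega
  obtain ⟨c, rfl⟩ := hdvd
  exact ⟨c, s, by rw [← hn]; ring⟩

lemma summable_B : Summable (fun n : ℕ => if Powerful n then ((n : ℝ))⁻¹ else 0) := by
  classical
  have hB : (fun n : ℕ => if Powerful n then ((n : ℝ))⁻¹ else 0)
      = Set.indicator {n : ℕ | Powerful n} (fun n => ((n : ℝ))⁻¹) := by
    funext n; simp [Set.indicator_apply]
  rw [hB, ← summable_subtype_iff_indicator]
  have hg : Summable (fun q : ℕ × ℕ => ((q.1 : ℝ) ^ 2)⁻¹ * ((q.2 : ℝ) ^ 3)⁻¹) := by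
    have h2 : Summable (fun m : ℕ => ((m : ℝ) ^ 2)⁻¹) := by
      simpa [one_div] using Real.summable_one_div_nat_pow.mpr (le_refl 2)
    have h3 : Summable (fun m : ℕ => ((m : ℝ) ^ 3)⁻¹) := by
      simpa [one_div] using Real.summable_one_div_nat_pow.mpr (by norm_num : 2 ≤ 3)
    exact h2.mul_of_nonneg h3 (fun m => by positivity) (fun m => by positivity)
  -- build injection
  have hdec : ∀ f : {n : ℕ | Powerful n}, ∃ q : ℕ × ℕ, (f : ℕ) = q.1 ^ 2 * q.2 ^ 3 := by
    rintro ⟨n, hn⟩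
    obtain ⟨m, b, hmb⟩ := powerful_decomp hn
    exact ⟨(m, b), hmb⟩
  choose j hj using hdec
  have hinj : Function.Injective j := by
    intro f g hfg
    have : (f : ℕ) = (g : ℕ) := by rw [hj f, hj g, hfg]
    exact Subtype.ext this
  have := hg.comp_injective hinj
  refine this.congr fun f => ?_
  show ((j f).1 ^ 2 : ℝ)⁻¹ * ((j f).2 ^ 3 : ℝ)⁻¹ = _
  have := hj f
  rw [Function.comp_apply]
  push_cast [this]
  rw [mul_inv]

lemma norm_G_le (a : ℕ → ℕ) {z : ℂ} (hz : ‖z‖ ≤ 1) (n : ℕ) :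
    ‖G a z n‖ ≤ if Powerful n then ((n : ℝ))⁻¹ else 0 := by
  rw [G]
  by_cases h : Powerful n
  · rw [if_pos h, if_pos h]
    have h1 : ‖z ^ omegaA a n‖ ≤ 1 := by
      rw [norm_pow]; exact pow_le_one₀ (norm_nonneg z) hz
    have h2 : ‖((n : ℂ))⁻¹‖ = ((n : ℝ))⁻¹ := by
      rw [norm_inv, Complex.norm_natCast]
    have h3 : ‖∏ p ∈ n.primeFactors, (1 + 1 / (p : ℂ))⁻¹‖ ≤ 1 := by
      rw [norm_prod]
      refine Finset.prod_le_one (fun p _ => norm_nonneg _) (fun p hp => ?_)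
      have hcast : (1 + 1 / (p : ℂ)) = ((1 + 1 / (p : ℝ) : ℝ) : ℂ) := by push_cast; ring
      rw [norm_inv, hcast, Complex.norm_real, Real.norm_eq_abs, abs_of_pos (by positivity)]
      exact inv_le_one_of_one_le₀ (le_add_of_nonneg_right (by positivity))
    calc ‖z ^ omegaA a n * ((n : ℂ))⁻¹ * ∏ p ∈ n.primeFactors, (1 + 1 / (p : ℂ))⁻¹‖
        = ‖z ^ omegaA a n‖ * ‖((n : ℂ))⁻¹‖ * ‖∏ p ∈ n.primeFactors, (1 + 1 / (p : ℂ))⁻¹‖ := by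
          rw [norm_mul, norm_mul]
      _ ≤ 1 * ((n : ℝ))⁻¹ * 1 := by
          apply mul_le_mul
          · rw [h2, one_mul]
            exact mul_le_of_le_one_left (by positivity) h1
          · exact h3
          · positivity
          · positivity
      _ = ((n : ℝ))⁻¹ := by ring
  · rw [if_neg h, if_neg h, norm_zero]

lemma summable_norm_G (a : ℕ → ℕ) {z : ℂ} (hz : ‖z‖ ≤ 1) :
    Summable (fun n => ‖G a z n‖) :=
  Summable.of_nonneg_of_le (fun _ => norm_nonneg _) (norm_G_le a hz) summable_B

open ArithmeticFunction in
noncomputable def M (n : ℕ) : ℂ := ((moebius n : ℤ) : ℂ) * ((n : ℂ) ^ 2)⁻¹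

open ArithmeticFunction in
lemma hasProd_M :
    HasProd (fun p : Nat.Primes => 1 - (((p : ℕ) : ℂ) ^ 2)⁻¹) (∑' n, M n) := by
  have h1 : M 1 = 1 := by simp [M]
  have h0 : M 0 = 0 := by simp [M]
  have hmul : ∀ {m n : ℕ}, m.Coprime n → M (m * n) = M m * M n := by
    intro m n h
    simp only [M]
    rw [isMultiplicative_moebius.map_mul_of_coprime h]
    push_cast
    rw [mul_pow, mul_inv]
    ring
  have hsum : Summable (fun n => ‖M n‖) := by
    have hb : Summable (fun n : ℕ => (((n : ℝ)) ^ 2)⁻¹) := by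
      simpa [one_div] using Real.summable_one_div_nat_pow.mpr (le_refl 2)
    refine Summable.of_nonneg_of_le (fun n => norm_nonneg _) (fun n => ?_) hb
    rw [M, norm_mul, norm_inv, norm_pow, Complex.norm_natCast]
    have habs : ‖((moebius n : ℤ) : ℂ)‖ ≤ 1 := by
      by_cases h : Squarefree n
      · rw [moebius_apply_of_squarefree h]
        push_cast
        rw [norm_pow, norm_neg, norm_one, one_pow]
      · rw [moebius_eq_zero_of_not_squarefree h]; simp
    exact mul_le_of_le_one_left (by positivity) habs
  have h := EulerProduct.eulerProduct_hasProd h1 hmul hsum h0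
  have heq : (fun p : Nat.Primes => ∑' e : ℕ, M ((p : ℕ) ^ e))
      = fun p : Nat.Primes => 1 - (((p : ℕ) : ℂ) ^ 2)⁻¹ := by
    funext p
    have hp := p.prop
    rw [tsum_eq_sum (s := {0, 1}) (fun e he => ?_)]
    · rw [Finset.sum_pair (by norm_num : (0:ℕ) ≠ 1)]
      rw [pow_zero, pow_one, h1]
      rw [M, moebius_apply_prime hp]
      push_cast
      ring
    · simp only [Finset.mem_insert, Finset.mem_singleton, not_or] at he
      rw [M, moebius_apply_prime_pow hp he.1, if_neg he.2]
      simp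
  rwa [heq] at h

lemma factor_ne_zero (p : Nat.Primes) : (1 : ℂ) - (((p : ℕ) : ℂ) ^ 2)⁻¹ ≠ 0 := by
  have hp2 : (2 : ℝ) ≤ ((p : ℕ) : ℝ) := by exact_mod_cast p.prop.two_le
  refine sub_ne_zero.mpr (fun h => ?_)
  have := congrArg norm h
  rw [norm_one, norm_inv, norm_pow, Complex.norm_natCast] at this
  have h4 : (4 : ℝ) ≤ ((p : ℕ) : ℝ) ^ 2 := by nlinarith
  rw [eq_comm, inv_eq_one] at this
  nlinarith

lemma hasProd_zeta2 :
    HasProd (fun p : Nat.Primes => ((1 : ℂ) - (((p : ℕ) : ℂ) ^ 2)⁻¹)⁻¹) (riemannZeta 2) := by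
  have h := riemannZeta_eulerProduct_hasProd (s := 2) (by norm_num)
  have heq : (fun p : Nat.Primes => ((1 : ℂ) - ((p : ℕ) : ℂ) ^ (-2 : ℂ))⁻¹)
      = fun p : Nat.Primes => ((1 : ℂ) - (((p : ℕ) : ℂ) ^ 2)⁻¹)⁻¹ := by
    funext p
    rw [show (-2 : ℂ) = -((2 : ℕ) : ℂ) by norm_num, Complex.cpow_neg, Complex.cpow_natCast]
  rwa [heq] at h

lemma tsum_M_eq : (∑' n, M n) = ((6 / Real.pi ^ 2 : ℝ) : ℂ) := by
  have h1 := hasProd_M.mul hasProd_zeta2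
  have heq : (fun p : Nat.Primes =>
      ((1 : ℂ) - (((p : ℕ) : ℂ) ^ 2)⁻¹) * ((1 : ℂ) - (((p : ℕ) : ℂ) ^ 2)⁻¹)⁻¹)
      = fun _ : Nat.Primes => (1 : ℂ) :=
    funext fun p => mul_inv_cancel₀ (factor_ne_zero p)
  rw [heq] at h1
  have key : (∑' n, M n) * riemannZeta 2 = 1 := h1.unique hasProd_one
  have hζ : riemannZeta 2 = (Real.pi : ℂ) ^ 2 / 6 := riemannZeta_two
  have hπ : (Real.pi : ℂ) ≠ 0 := Complex.ofReal_ne_zero.mpr Real.pi_ne_zero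
  rw [hζ] at key
  push_cast
  field_simp at key ⊢
  linear_combination key

lemma factor_eq (a : ℕ → ℕ) {z : ℂ} (hz : ‖z‖ ≤ 1) (p : Nat.Primes) :
    (1 - 1 / ((p : ℕ) : ℂ) ^ 2) * ∑' e : ℕ, G a z ((p : ℕ) ^ e)
      = 1 - 1 / ((p : ℕ) : ℂ) ^ 2 +
        ∑' j : ℕ, if 2 ≤ j then
          z ^ a j * (1 / ((p : ℕ) : ℂ) ^ j - 1 / ((p : ℕ) : ℂ) ^ (j + 1)) else 0 := by
  set q : ℂ := ((p : ℕ) : ℂ) with hq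
  have hq0 : q ≠ 0 := Nat.cast_ne_zero.mpr p.prop.pos.ne'
  have hq1 : (1 : ℂ) + 1 / q ≠ 0 := by
    have hcast : ((1 + 1 / ((p : ℕ) : ℝ) : ℝ) : ℂ) = 1 + 1 / q := by push_cast; rfl
    rw [← hcast]
    exact Complex.ofReal_ne_zero.mpr (by positivity)
  have hGsum : Summable (fun e : ℕ => G a z ((p : ℕ) ^ e)) :=
    ((summable_norm_G a hz).of_norm).comp_injective
      (Nat.pow_right_injective p.prop.two_le)
  have hpt : ∀ e : ℕ, (1 - 1 / q ^ 2) * G a z ((p : ℕ) ^ e)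
      = (if e = 0 then (1 - 1 / q ^ 2) else 0) +
        (if 2 ≤ e then z ^ a e * (1 / q ^ e - 1 / q ^ (e + 1)) else 0) := by
    intro e
    rw [G_pow a z p.prop e]
    match e with
    | 0 => simp
    | 1 => simp
    | (e + 2) =>
      rw [if_neg (by omega), if_neg (by omega), if_neg (by omega : ¬ (e + 2) = 0),
        if_pos (by omega : 2 ≤ e + 2), zero_add]
      have key : (1 - 1 / q ^ 2) * (1 + 1 / q)⁻¹ = 1 - 1 / q := by
        have h2 : (1 : ℂ) - 1 / q ^ 2 = (1 - 1 / q) * (1 + 1 / q) := by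
          field_simp
          ring
        rw [h2, mul_inv_cancel_right₀ hq1]
      calc (1 - 1 / q ^ 2) * (z ^ a (e + 2) * (q ^ (e + 2))⁻¹ * (1 + 1 / q)⁻¹)
          = z ^ a (e + 2) * ((q ^ (e + 2))⁻¹ * ((1 - 1 / q ^ 2) * (1 + 1 / q)⁻¹)) := by ring
        _ = z ^ a (e + 2) * ((q ^ (e + 2))⁻¹ * (1 - 1 / q)) := by rw [key]
        _ = z ^ a (e + 2) * (1 / q ^ (e + 2) - 1 / q ^ (e + 2 + 1)) := by
            rw [pow_succ]
            simp only [one_div, mul_inv]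
            ring
  have hu : Summable (fun j : ℕ =>
      if 2 ≤ j then z ^ a j * (1 / q ^ j - 1 / q ^ (j + 1)) else 0) := by
    have hfeq : (fun j : ℕ => if 2 ≤ j then z ^ a j * (1 / q ^ j - 1 / q ^ (j + 1)) else 0)
        = fun e => (1 - 1 / q ^ 2) * G a z ((p : ℕ) ^ e)
            - (if e = 0 then (1 - 1 / q ^ 2) else 0) := by
      funext e
      rw [hpt e]
      ring
    rw [hfeq]
    exact (hGsum.mul_left _).sub (hasSum_ite_eq 0 _).summable
  have h1 : HasSum (fun e : ℕ => (1 - 1 / q ^ 2) * G a z ((p : ℕ) ^ e))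
      ((1 - 1 / q ^ 2) * ∑' e : ℕ, G a z ((p : ℕ) ^ e)) := hGsum.hasSum.mul_left _
  have h2 : HasSum (fun e : ℕ => (if e = 0 then (1 - 1 / q ^ 2) else 0) +
        (if 2 ≤ e then z ^ a e * (1 / q ^ e - 1 / q ^ (e + 1)) else 0))
      ((1 - 1 / q ^ 2) +
        ∑' j : ℕ, if 2 ≤ j then z ^ a j * (1 / q ^ j - 1 / q ^ (j + 1)) else 0) :=
    (hasSum_ite_eq 0 _).add hu.hasSum
  rw [show (fun e : ℕ => (1 - 1 / q ^ 2) * G a z ((p : ℕ) ^ e))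
      = fun e : ℕ => (if e = 0 then (1 - 1 / q ^ 2) else 0) +
        (if 2 ≤ e then z ^ a e * (1 / q ^ e - 1 / q ^ (e + 1)) else 0) from funext hpt] at h1
  exact h1.unique h2

lemma fiber_hasSum (a : ℕ → ℕ) (z : ℂ) (m : ℕ) :
    HasSum (fun f : {f : ℕ // Powerful f ∧ omegaA a f = m} =>
      ((6 / Real.pi ^ 2 : ℝ) : ℂ) * G a z (f : ℕ)) ((eAm a m : ℂ) * z ^ m) := by
  have hwsum : Summable (fun f : {f : ℕ // Powerful f ∧ omegaA a f = m} =>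
      ((f : ℕ) : ℝ)⁻¹ * ∏ p ∈ (f : ℕ).primeFactors, (1 + 1 / (p : ℝ))⁻¹) := by
    have hBsub : Summable (fun f : {f : ℕ // Powerful f ∧ omegaA a f = m} =>
        if Powerful (f : ℕ) then (((f : ℕ) : ℝ))⁻¹ else 0) :=
      summable_B.comp_injective Subtype.val_injective
    refine Summable.of_nonneg_of_le (fun f => ?_) (fun f => ?_) hBsub
    · exact mul_nonneg (by positivity)
        (Finset.prod_nonneg fun p _ => inv_nonneg.mpr (by positivity))
    · rw [if_pos f.2.1]
      refine mul_le_of_le_one_right (by positivity) ?_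
      refine Finset.prod_le_one (fun p _ => inv_nonneg.mpr (by positivity)) (fun p _ => ?_)
      exact inv_le_one_of_one_le₀ (le_add_of_nonneg_right (by positivity))
  have hfin := ((Complex.hasSum_ofReal.mpr hwsum.hasSum).mul_left
    ((6 / Real.pi ^ 2 : ℝ) : ℂ)).mul_right (z ^ m)
  have hfun : (fun f : {f : ℕ // Powerful f ∧ omegaA a f = m} =>
      (((6 / Real.pi ^ 2 : ℝ) : ℂ) *
        ((((f : ℕ) : ℝ)⁻¹ * ∏ p ∈ (f : ℕ).primeFactors, (1 + 1 / (p : ℝ))⁻¹ : ℝ) : ℂ)) * z ^ m)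
      = fun f : {f : ℕ // Powerful f ∧ omegaA a f = m} =>
        ((6 / Real.pi ^ 2 : ℝ) : ℂ) * G a z (f : ℕ) := by
    funext f
    rw [G, if_pos f.2.1, f.2.2]
    push_cast
    ring
  have hval : (((6 / Real.pi ^ 2 : ℝ) : ℂ) *
      ((∑' f : {f : ℕ // Powerful f ∧ omegaA a f = m},
        (((f : ℕ) : ℝ)⁻¹ * ∏ p ∈ (f : ℕ).primeFactors, (1 + 1 / (p : ℝ))⁻¹) : ℝ) : ℂ)) * z ^ m
      = (eAm a m : ℂ) * z ^ m := by
    rw [eAm]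
    push_cast
    ring
  rw [hfun, hval] at hfin
  exact hfin

end EAmAux

theorem eAm_generating_function (a : ℕ → ℕ) (h1 : a 1 = 0) (z : ℂ) (hz : ‖z‖ ≤ 1) :
    ∃ P : ℂ,
      HasProd (fun p : Nat.Primes =>
        1 - 1 / ((p : ℕ) : ℂ) ^ 2 +
          ∑' j : ℕ, if 2 ≤ j then
            z ^ (a j) * (1 / ((p : ℕ) : ℂ) ^ j - 1 / ((p : ℕ) : ℂ) ^ (j + 1)) else 0) P ∧
      HasSum (fun m : ℕ => (eAm a m : ℂ) * z ^ m) P := by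
  classical
  refine ⟨((6 / Real.pi ^ 2 : ℝ) : ℂ) * ∑' n, EAmAux.G a z n, ?_, ?_⟩
  · have hEuler := EulerProduct.eulerProduct_hasProd (f := EAmAux.G a z) (EAmAux.G_one a z)
      (fun {m n} h => EAmAux.G_mul a z h) (EAmAux.summable_norm_G a hz) (EAmAux.G_zero a z)
    have hCprod : HasProd (fun p : Nat.Primes => 1 - 1 / ((p : ℕ) : ℂ) ^ 2)
        ((6 / Real.pi ^ 2 : ℝ) : ℂ) := by
      have h := EAmAux.hasProd_M
      rw [EAmAux.tsum_M_eq] at h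
      simpa [one_div] using h
    have hmulprod := hCprod.mul hEuler
    rw [show (fun p : Nat.Primes =>
        (1 - 1 / ((p : ℕ) : ℂ) ^ 2) * ∑' e : ℕ, EAmAux.G a z ((p : ℕ) ^ e))
      = fun p : Nat.Primes =>
        1 - 1 / ((p : ℕ) : ℂ) ^ 2 +
          ∑' j : ℕ, if 2 ≤ j then
            z ^ (a j) * (1 / ((p : ℕ) : ℂ) ^ j - 1 / ((p : ℕ) : ℂ) ^ (j + 1)) else 0
      from funext (EAmAux.factor_eq a hz)] at hmulprod
    exact hmulprod
  · have hG : HasSum (fun n => ((6 / Real.pi ^ 2 : ℝ) : ℂ) * EAmAux.G a z n)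
        (((6 / Real.pi ^ 2 : ℝ) : ℂ) * ∑' n, EAmAux.G a z n) :=
      ((EAmAux.summable_norm_G a hz).of_norm.hasSum).mul_left _
    have hsupp : Function.support (fun n => ((6 / Real.pi ^ 2 : ℝ) : ℂ) * EAmAux.G a z n)
        ⊆ {n : ℕ | Powerful n} := by
      intro n hn
      by_contra h
      have h' : ¬ Powerful n := h
      exact hn (by simp [EAmAux.G, h'])
    have hPF : HasSum (fun f : {n : ℕ | Powerful n} =>
        ((6 / Real.pi ^ 2 : ℝ) : ℂ) * EAmAux.G a z (f : ℕ))
        (((6 / Real.pi ^ 2 : ℝ) : ℂ) * ∑' n, EAmAux.G a z n) :=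
      (hasSum_subtype_iff_of_support_subset hsupp).mpr hG
    let E : (Σ m : ℕ, {f : ℕ // Powerful f ∧ omegaA a f = m}) ≃ {n : ℕ | Powerful n} :=
      { toFun := fun x => ⟨x.2.1, x.2.2.1⟩
        invFun := fun f => ⟨omegaA a f.1, ⟨f.1, f.2, rfl⟩⟩
        left_inv := by rintro ⟨m, f, hf, rfl⟩; rfl
        right_inv := fun f => rfl }
    have hsig : HasSum (fun x : Σ m : ℕ, {f : ℕ // Powerful f ∧ omegaA a f = m} =>
        ((6 / Real.pi ^ 2 : ℝ) : ℂ) * EAmAux.G a z (x.2 : ℕ))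
        (((6 / Real.pi ^ 2 : ℝ) : ℂ) * ∑' n, EAmAux.G a z n) := E.hasSum_iff.mpr hPF
    exact hsig.sigma (fun m => EAmAux.fiber_hasSum a z m)
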